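/- Let ψ_1,…,ψ_N : ℝ^d → ℂ be measurable with Re ψ_j(ξ) ≤ 0 for all ξ, j and |ψ_j(ξ)| ≤ C(1 + |ξ|²) for some C > 0. Let b = (b_1,…,b_N) ∈ [0,∞)^N and let φ be a measure on [0,∞)^N with ∫ min(|z|, 1) φ(dz) < ∞. For a Schwartz function h : ℝ^d → ℂ, z ∈ [0,∞)^N and x ∈ ℝ^d, define T_z h(x) = (2π)^{−d/2} ∫ e^{i⟨ξ,x⟩} exp(Σ_j z_j ψ_j(ξ)) ĥ(ξ) dξ, G_j h(x) = (2π)^{−d/2} ∫ e^{i⟨ξ,x⟩} ψ_j(ξ) ĥ(ξ) dξ, and S(−Ψ(ξ)) = −Σ_j b_j ψ_j(ξ) + ∫_{[0,∞)^N} (1 − exp(Σ_j z_j ψ_j(ξ))) φ(dz). Then all the integrals involved converge absolutely and, for every x ∈ ℝ^d, −(2π)^{−d/2} ∫_{ℝ^d} e^{i⟨ξ,x⟩} S(−Ψ(ξ)) ĥ(ξ) dξ = Σ_{j=1}^N b_j G_j h(x) + ∫_{[0,∞)^N} (T_z h(x) − h(x)) φ(dz). (Theorem 3.8: multiparameter Phillips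 formula — each component of the generator of the subordinated field equals b·G h + ∫(T_z h − h) φ(dz).) -/

import Mathlib

open MeasureTheory
open scoped RealInnerProductSpace
open FourierTransform Real
open scoped ENNReal

/-- The Fourier transform `ĥ(ξ) = (2π)^{-d/2} ∫ e^{-i⟨ξ,y⟩} h(y) dy`. -/
noncomputable def fourierT {d : ℕ} (h : EuclideanSpace ℝ (Fin d) → ℂ)
    (ξ : EuclideanSpace ℝ (Fin d)) : ℂ :=
  (((2 * Real.pi) ^ (-(d : ℝ) / 2) : ℝ) : ℂ) *
    ∫ y, Complex.exp (-Complex.I * (⟪ξ, y⟫ : ℂ)) * h y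

/-- The semigroup `T_z h(x) = (2π)^{-d/2} ∫ e^{i⟨ξ,x⟩} exp(∑_j z_j ψ_j(ξ)) ĥ(ξ) dξ`. -/
noncomputable def Tz {d N : ℕ} (ψ : Fin N → EuclideanSpace ℝ (Fin d) → ℂ)
    (h : EuclideanSpace ℝ (Fin d) → ℂ) (z : Fin N → ℝ)
    (x : EuclideanSpace ℝ (Fin d)) : ℂ :=
  (((2 * Real.pi) ^ (-(d : ℝ) / 2) : ℝ) : ℂ) *
    ∫ ξ, Complex.exp (Complex.I * (⟪ξ, x⟫ : ℂ)) *
      Complex.exp (∑ j, (z j : ℂ) * ψ j ξ) * fourierT h ξ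

/-- The generator `G_j h(x) = (2π)^{-d/2} ∫ e^{i⟨ξ,x⟩} ψ_j(ξ) ĥ(ξ) dξ`. -/
noncomputable def Gj {d N : ℕ} (ψ : Fin N → EuclideanSpace ℝ (Fin d) → ℂ)
    (h : EuclideanSpace ℝ (Fin d) → ℂ) (j : Fin N)
    (x : EuclideanSpace ℝ (Fin d)) : ℂ :=
  (((2 * Real.pi) ^ (-(d : ℝ) / 2) : ℝ) : ℂ) *
    ∫ ξ, Complex.exp (Complex.I * (⟪ξ, x⟫ : ℂ)) * ψ j ξ * fourierT h ξ

/-- The multivariate Bernstein function evaluated at `−Ψ(ξ)`: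
`S(−Ψ(ξ)) = −∑_j b_j ψ_j(ξ) + ∫ (1 − exp(∑_j z_j ψ_j(ξ))) φ(dz)`. -/
noncomputable def SofPsi {d N : ℕ} (ψ : Fin N → EuclideanSpace ℝ (Fin d) → ℂ)
    (b : Fin N → ℝ) (φ : Measure (Fin N → ℝ))
    (ξ : EuclideanSpace ℝ (Fin d)) : ℂ :=
  (-∑ j, (b j : ℂ) * ψ j ξ) +
    ∫ z, (1 - Complex.exp (∑ j, (z j : ℂ) * ψ j ξ)) ∂φ

lemma fourierT_eq {d : ℕ} (h : EuclideanSpace ℝ (Fin d) → ℂ) (ξ : EuclideanSpace ℝ (Fin d)) :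
    fourierT h ξ = (((2 * Real.pi) ^ (-(d : ℝ) / 2) : ℝ) : ℂ) * 𝓕 h ((2 * Real.pi)⁻¹ • ξ) := by
  rw [fourierT, Real.fourier_eq']
  congr 1
  refine integral_congr_ae (Filter.Eventually.of_forall fun y => ?_)
  simp only [smul_eq_mul]
  congr 1
  rw [real_inner_smul_right]
  have h2 : -2 * π * ((2 * π)⁻¹ * ⟪y, ξ⟫) = -⟪ξ, y⟫ := by
    rw [real_inner_comm y ξ]; field_simp
  rw [h2]
  push_cast
  ring



lemma cc_mul (d : ℕ) : (((2 * Real.pi) ^ (-(d : ℝ) / 2) : ℝ)) * (((2 * Real.pi) ^ (-(d : ℝ) / 2) : ℝ))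
    * ((2 * Real.pi) ^ (d:ℕ) : ℝ) = 1 := by
  rw [← Real.rpow_add Real.two_pi_pos, ← Real.rpow_natCast (2 * Real.pi) d,
    ← Real.rpow_add Real.two_pi_pos]
  norm_num

lemma fourierT_inversion {d : ℕ} (h : SchwartzMap (EuclideanSpace ℝ (Fin d)) ℂ)
    (x : EuclideanSpace ℝ (Fin d)) :
    (((2 * Real.pi) ^ (-(d : ℝ) / 2) : ℝ) : ℂ) *
      ∫ ξ, Complex.exp (Complex.I * (⟪ξ, x⟫ : ℂ)) * fourierT (fun y => h y) ξ = h x := by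
  have h2π : (0:ℝ) < 2 * Real.pi := by positivity
  set c : ℝ := ((2 * Real.pi) ^ (-(d : ℝ) / 2) : ℝ) with hc
  set g := SchwartzMap.fourierTransformCLM ℂ h with hgdef
  have hg : ⇑g = 𝓕 (fun y => (h y : ℂ)) := by
    rw [hgdef, SchwartzMap.fourierTransformCLM_apply, SchwartzMap.fourier_coe]
  set F : EuclideanSpace ℝ (Fin d) → ℂ :=
    fun u => Complex.exp (Complex.I * ((⟪(2 * Real.pi) • u, x⟫ : ℝ) : ℂ)) * g u with hF
  have key : ∀ ξ, Complex.exp (Complex.I * (⟪ξ, x⟫ : ℂ)) * fourierT (fun y => h y) ξ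
      = (c : ℂ) * F ((2 * Real.pi)⁻¹ • ξ) := by
    intro ξ
    rw [fourierT_eq, ← hg]
    simp only [hF, smul_smul, mul_inv_cancel₀ h2π.ne', one_smul]
    ring
  rw [integral_congr_ae (Filter.Eventually.of_forall key), integral_const_mul,
    MeasureTheory.Measure.integral_comp_inv_smul volume F (2 * Real.pi)]
  have hFint : ∫ u, F u = 𝓕⁻ (⇑g) x := by
    rw [Real.fourierInv_eq']
    refine integral_congr_ae (Filter.Eventually.of_forall fun u => ?_)
    simp only [hF, smul_eq_mul, real_inner_smul_left]
    congr 2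
    push_cast
    ring
  have hinv : 𝓕⁻ (⇑g) x = h x := by
    rw [hg]
    exact (h.integrable).fourierInv_fourier_eq (hg ▸ g.integrable)
      h.continuous.continuousAt
  rw [hFint, hinv]
  rw [finrank_euclideanSpace_fin, abs_of_pos (pow_pos h2π d)]
  have : ((2 * Real.pi) ^ d : ℝ) • (h x : ℂ) = (((2 * Real.pi) ^ d : ℝ) : ℂ) * h x := by
    rw [Complex.real_smul]
  rw [this]
  have : (c : ℂ) * ((c : ℂ) * ((((2 * Real.pi) ^ d : ℝ) : ℂ) * h x))
      = ((c * c * ((2 * Real.pi) ^ d : ℝ) : ℝ) : ℂ) * h x := by push_cast; ring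
  rw [this, hc, cc_mul d]
  simp

lemma fourierT_continuous {d : ℕ} (h : SchwartzMap (EuclideanSpace ℝ (Fin d)) ℂ) :
    Continuous (fourierT (fun y => h y)) := by
  have : fourierT (fun y => h y) = fun ξ => (((2 * Real.pi) ^ (-(d : ℝ) / 2) : ℝ) : ℂ) *
      (SchwartzMap.fourierTransformCLM ℂ h) ((2 * Real.pi)⁻¹ • ξ) := by
    funext ξ
    rw [fourierT_eq, SchwartzMap.fourierTransformCLM_apply, SchwartzMap.fourier_coe]
  rw [this]
  exact continuous_const.mul ((SchwartzMap.fourierTransformCLM ℂ h).continuous.comp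
    (continuous_const_smul _))

lemma fourierT_weighted_integrable {d : ℕ} (h : SchwartzMap (EuclideanSpace ℝ (Fin d)) ℂ) :
    Integrable (fun ξ => (1 + ‖ξ‖ ^ 2) * ‖fourierT (fun y => h y) ξ‖) := by
  have h2π : (0:ℝ) < 2 * Real.pi := by positivity
  set c : ℝ := ((2 * Real.pi) ^ (-(d : ℝ) / 2) : ℝ) with hc
  have hcpos : 0 < c := Real.rpow_pos_of_pos h2π _
  set g := SchwartzMap.fourierTransformCLM ℂ h with hgdef
  set G : EuclideanSpace ℝ (Fin d) → ℝ :=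
    fun u => (1 + ‖(2 * Real.pi) • u‖ ^ 2) * (c * ‖g u‖) with hG
  have hGint : Integrable G := by
    have : G = fun u => c * ‖g u‖ + ((2 * Real.pi) ^ 2 * c) * (‖u‖ ^ 2 * ‖g u‖) := by
      funext u
      rw [hG]
      dsimp only
      rw [norm_smul]
      simp only [Real.norm_eq_abs, abs_of_pos h2π]
      ring
    rw [this]
    exact ((g.integrable.norm.const_mul c)).add ((g.integrable_pow_mul volume 2).const_mul _)
  have key : (fun ξ => (1 + ‖ξ‖ ^ 2) * ‖fourierT (fun y => h y) ξ‖)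
      = fun ξ => G ((2 * Real.pi)⁻¹ • ξ) := by
    funext ξ
    rw [hG]
    simp only [smul_smul, mul_inv_cancel₀ h2π.ne', one_smul]
    rw [fourierT_eq, hgdef, SchwartzMap.fourierTransformCLM_apply, SchwartzMap.fourier_coe]
    rw [norm_mul, Complex.norm_real, Real.norm_eq_abs, abs_of_pos hcpos]
  rw [key]
  exact (integrable_comp_smul_iff volume G (inv_ne_zero h2π.ne')).2 hGint

lemma fourierT_integrable {d : ℕ} (h : SchwartzMap (EuclideanSpace ℝ (Fin d)) ℂ) :
    Integrable (fourierT (fun y => h y)) := by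
  refine (fourierT_weighted_integrable h).mono'
    (fourierT_continuous h).aestronglyMeasurable
    (Filter.Eventually.of_forall fun ξ => ?_)
  nlinarith [norm_nonneg (fourierT (fun y => h y) ξ), sq_nonneg ‖ξ‖,
    mul_nonneg (sq_nonneg ‖ξ‖) (norm_nonneg (fourierT (fun y => h y) ξ))]

lemma norm_one_sub_exp (w : ℂ) (hw : w.re ≤ 0) : ‖1 - Complex.exp w‖ ≤ min 2 (2 * ‖w‖) := by
  rcases le_total ‖w‖ 1 with hw1 | hw1
  · have h1 : ‖Complex.exp w - 1‖ ≤ 2 * ‖w‖ := Complex.norm_exp_sub_one_le hw1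
    rw [← norm_neg, neg_sub] at h1
    simp only [le_min_iff]
    exact ⟨by linarith, h1⟩
  · have h2 : ‖Complex.exp w‖ ≤ 1 := by
      rw [Complex.norm_exp]
      exact Real.exp_le_one_iff.2 hw
    have h3 : ‖1 - Complex.exp w‖ ≤ 2 := by
      calc ‖1 - Complex.exp w‖ ≤ ‖(1:ℂ)‖ + ‖Complex.exp w‖ := norm_sub_le _ _
      _ ≤ 2 := by rw [norm_one]; linarith
    simp only [le_min_iff]
    exact ⟨h3, by linarith⟩

lemma sum_le_sqrt_card {N : ℕ} (z : Fin N → ℝ) (hz : ∀ j, 0 ≤ z j) :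
    ∑ j, z j ≤ Real.sqrt N * Real.sqrt (∑ j, z j ^ 2) := by
  have h1 : (∑ j, z j) ^ 2 ≤ (N : ℝ) * ∑ j, z j ^ 2 := by
    have := sq_sum_le_card_mul_sum_sq (s := (Finset.univ : Finset (Fin N))) (f := z)
    simpa using this
  have h2 : ∑ j, z j = Real.sqrt ((∑ j, z j) ^ 2) :=
    (Real.sqrt_sq (Finset.sum_nonneg fun j _ => hz j)).symm
  rw [h2, ← Real.sqrt_mul (by positivity)]
  exact Real.sqrt_le_sqrt h1

lemma re_sum_nonpos {d N : ℕ} (ψ : Fin N → EuclideanSpace ℝ (Fin d) → ℂ)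
    (hre : ∀ j ξ, (ψ j ξ).re ≤ 0) (ξ : EuclideanSpace ℝ (Fin d))
    (z : Fin N → ℝ) (hz : ∀ j, 0 ≤ z j) :
    (∑ j, (z j : ℂ) * ψ j ξ).re ≤ 0 := by
  rw [Complex.re_sum]
  refine Finset.sum_nonpos fun j _ => ?_
  rw [Complex.re_ofReal_mul]
  exact mul_nonpos_of_nonneg_of_nonpos (hz j) (hre j ξ)

lemma bound_one_sub_exp {d N : ℕ} (ψ : Fin N → EuclideanSpace ℝ (Fin d) → ℂ)
    (hre : ∀ j ξ, (ψ j ξ).re ≤ 0) (C : ℝ) (hC : 0 < C)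
    (hbound : ∀ j ξ, ‖ψ j ξ‖ ≤ C * (1 + ‖ξ‖ ^ 2))
    (ξ : EuclideanSpace ℝ (Fin d)) (z : Fin N → ℝ) (hz : ∀ j, 0 ≤ z j) :
    ‖1 - Complex.exp (∑ j, (z j : ℂ) * ψ j ξ)‖ ≤
      (2 + 2 * Real.sqrt N * C * (1 + ‖ξ‖ ^ 2)) * min (Real.sqrt (∑ j, z j ^ 2)) 1 := by
  set a : ℝ := Real.sqrt N * C * (1 + ‖ξ‖ ^ 2) with ha
  have hapos : 0 ≤ a := by positivity
  set r : ℝ := Real.sqrt (∑ j, z j ^ 2) with hr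
  have hrpos : 0 ≤ r := Real.sqrt_nonneg _
  set w : ℂ := ∑ j, (z j : ℂ) * ψ j ξ with hw
  have hwre : w.re ≤ 0 := re_sum_nonpos ψ hre ξ z hz
  have hwnorm : ‖w‖ ≤ a * r := by
    calc ‖w‖ ≤ ∑ j, ‖(z j : ℂ) * ψ j ξ‖ := norm_sum_le _ _
    _ ≤ ∑ j, z j * (C * (1 + ‖ξ‖ ^ 2)) := by
        refine Finset.sum_le_sum fun j _ => ?_
        rw [norm_mul, Complex.norm_real, Real.norm_eq_abs, abs_of_nonneg (hz j)]
        exact mul_le_mul_of_nonneg_left (hbound j ξ) (hz j)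
    _ = (∑ j, z j) * (C * (1 + ‖ξ‖ ^ 2)) := by rw [← Finset.sum_mul]
    _ ≤ (Real.sqrt N * r) * (C * (1 + ‖ξ‖ ^ 2)) := by
        refine mul_le_mul_of_nonneg_right ?_ (by positivity)
        exact sum_le_sqrt_card z hz
    _ = a * r := by rw [ha]; ring
  have hmain := norm_one_sub_exp w hwre
  rcases le_total r 1 with hr1 | hr1
  · rw [min_eq_left hr1]
    calc ‖1 - Complex.exp w‖ ≤ 2 * ‖w‖ := hmain.trans (min_le_right _ _)
    _ ≤ 2 * (a * r) := by linarith [norm_nonneg w]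
    _ ≤ (2 + 2 * Real.sqrt N * C * (1 + ‖ξ‖ ^ 2)) * r := by
        rw [ha]; nlinarith
  · rw [min_eq_right hr1]
    calc ‖1 - Complex.exp w‖ ≤ 2 := hmain.trans (min_le_left _ _)
    _ ≤ (2 + 2 * Real.sqrt N * C * (1 + ‖ξ‖ ^ 2)) * 1 := by nlinarith [Real.sqrt_nonneg (N:ℝ), norm_nonneg ξ, sq_nonneg ‖ξ‖]

lemma vmin_cont {N : ℕ} : Continuous (fun z : Fin N → ℝ => min (Real.sqrt (∑ j, z j ^ 2)) 1) := by
  refine Continuous.min ?_ continuous_const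
  exact Real.continuous_sqrt.comp (continuous_finset_sum _ fun j _ => (continuous_apply j).pow 2)

lemma vmin_nonneg {N : ℕ} (z : Fin N → ℝ) : 0 ≤ min (Real.sqrt (∑ j, z j ^ 2)) 1 :=
  le_min (Real.sqrt_nonneg _) zero_le_one

lemma vmin_integrable {N : ℕ} (φ : Measure (Fin N → ℝ))
    (hφint : ∫⁻ z, ENNReal.ofReal (min (Real.sqrt (∑ j, z j ^ 2)) 1) ∂φ < ⊤) :
    Integrable (fun z : Fin N → ℝ => min (Real.sqrt (∑ j, z j ^ 2)) 1) φ := by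
  refine ⟨vmin_cont.aestronglyMeasurable, ?_⟩
  rw [hasFiniteIntegral_iff_ofReal (Filter.Eventually.of_forall vmin_nonneg)]
  exact hφint

lemma restrict_trick {N : ℕ} (φ : Measure (Fin N → ℝ)) {E : Type*} [NormedAddCommGroup E]
    [NormedSpace ℝ E] (f : (Fin N → ℝ) → E) (hf0 : f 0 = 0) :
    (Integrable f φ ↔ Integrable f (φ.restrict {(0 : Fin N → ℝ)}ᶜ)) ∧
    ∫ z, f z ∂φ = ∫ z, f z ∂(φ.restrict {(0 : Fin N → ℝ)}ᶜ) := by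
  have hms : MeasurableSet ({(0 : Fin N → ℝ)} : Set _) := measurableSet_singleton 0
  have hdec : φ.restrict {(0 : Fin N → ℝ)} + φ.restrict {(0 : Fin N → ℝ)}ᶜ = φ :=
    Measure.restrict_add_restrict_compl hms
  have hae : f =ᵐ[φ.restrict {(0 : Fin N → ℝ)}] 0 := by
    refine (ae_restrict_iff' hms).2 (Filter.Eventually.of_forall fun z hz => ?_)
    rw [Set.mem_singleton_iff] at hz
    rw [hz, hf0]; rfl
  have hint0 : Integrable f (φ.restrict {(0 : Fin N → ℝ)}) :=
    (integrable_zero _ _ _).congr hae.symm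
  have hiff : Integrable f φ ↔ Integrable f (φ.restrict {(0 : Fin N → ℝ)}ᶜ) := by
    constructor
    · intro hfφ; exact hfφ.restrict
    · intro hfr
      rw [← hdec]
      exact integrable_add_measure.2 ⟨hint0, hfr⟩
  refine ⟨hiff, ?_⟩
  by_cases hI : Integrable f (φ.restrict {(0 : Fin N → ℝ)}ᶜ)
  · conv_lhs => rw [← hdec]
    rw [integral_add_measure hint0 hI, integral_congr_ae hae]
    simp
  · rw [integral_undef (fun hc => hI (hiff.1 hc)), integral_undef hI]

lemma sigmaFinite_restrict {N : ℕ} (φ : Measure (Fin N → ℝ))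
    (hφint : ∫⁻ z, ENNReal.ofReal (min (Real.sqrt (∑ j, z j ^ 2)) 1) ∂φ < ⊤) :
    SigmaFinite (φ.restrict {(0 : Fin N → ℝ)}ᶜ) := by
  set v : (Fin N → ℝ) → ℝ := fun z => min (Real.sqrt (∑ j, z j ^ 2)) 1 with hv
  have hvmeas : Measurable fun z => ENNReal.ofReal (v z) :=
    ENNReal.measurable_ofReal.comp vmin_cont.measurable
  set A : ℕ → Set (Fin N → ℝ) := fun n => {z | ((n : ℝ≥0∞))⁻¹ ≤ ENNReal.ofReal (v z)} with hA
  have hAfin : ∀ n, φ (A n) < ⊤ := by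
    intro n
    have hle := mul_meas_ge_le_lintegral₀ (μ := φ) hvmeas.aemeasurable ((n : ℝ≥0∞))⁻¹
    by_contra hcon
    push_neg at hcon
    have htop : φ (A n) = ⊤ := top_le_iff.1 hcon
    rw [hA] at htop
    rw [htop, ENNReal.mul_top (ENNReal.inv_ne_zero.2 (ENNReal.natCast_ne_top n))] at hle
    exact absurd hle (not_le.2 hφint)
  refine ⟨⟨⟨fun n => A n ∪ {0}, fun _ => trivial, fun n => ?_, ?_⟩⟩⟩
  · rw [Measure.restrict_apply' (measurableSet_singleton 0).compl]
    refine lt_of_le_of_lt (measure_mono ?_) (hAfin n)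
    rintro z ⟨hz1 | hz1, hz2⟩
    · exact hz1
    · exact absurd hz1 hz2
  · rw [Set.eq_univ_iff_forall]
    intro z
    by_cases hz : z = 0
    · exact Set.mem_iUnion.2 ⟨0, Or.inr hz⟩
    · have hj : ∃ j, z j ≠ 0 := Function.ne_iff.1 hz
      obtain ⟨j, hj⟩ := hj
      have hsum : 0 < ∑ j, z j ^ 2 :=
        Finset.sum_pos' (fun i _ => sq_nonneg _)
          ⟨j, Finset.mem_univ j, (sq_nonneg _).lt_of_ne (Ne.symm (pow_ne_zero 2 hj))⟩
      have hvpos : 0 < v z := lt_min (Real.sqrt_pos.2 hsum) one_pos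
      obtain ⟨n, hn⟩ := ENNReal.exists_inv_nat_lt (ne_of_gt (ENNReal.ofReal_pos.2 hvpos))
      exact Set.mem_iUnion.2 ⟨n, Or.inl hn.le⟩

/-- Theorem 3.8 (multiparameter Phillips formula): all the integrals involved converge
absolutely, and the pseudo-differential operator with symbol `−S(−Ψ)` equals
`b·G h + ∫ (T_z h − h) dφ`. -/
theorem stmt_12 {d N : ℕ}
    (ψ : Fin N → EuclideanSpace ℝ (Fin d) → ℂ)
    (hψmeas : ∀ j, Measurable (ψ j))
    (hre : ∀ j ξ, (ψ j ξ).re ≤ 0)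
    (C : ℝ) (hC : 0 < C)
    (hbound : ∀ j ξ, ‖ψ j ξ‖ ≤ C * (1 + ‖ξ‖ ^ 2))
    (b : Fin N → ℝ) (hb : ∀ j, 0 ≤ b j)
    (φ : Measure (Fin N → ℝ))
    (hφsupp : ∀ᵐ z ∂φ, ∀ j, 0 ≤ z j)
    (hφint : ∫⁻ z, ENNReal.ofReal (min (Real.sqrt (∑ j, z j ^ 2)) 1) ∂φ < ⊤)
    (h : SchwartzMap (EuclideanSpace ℝ (Fin d)) ℂ)
    (x : EuclideanSpace ℝ (Fin d)) :
    (∀ ξ : EuclideanSpace ℝ (Fin d),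
      Integrable (fun z : Fin N → ℝ =>
        1 - Complex.exp (∑ j, (z j : ℂ) * ψ j ξ)) φ) ∧
    Integrable (fun ξ : EuclideanSpace ℝ (Fin d) =>
      Complex.exp (Complex.I * (⟪ξ, x⟫ : ℂ)) * SofPsi ψ b φ ξ *
        fourierT (fun y => h y) ξ) ∧
    Integrable (fun z : Fin N → ℝ => Tz ψ (fun y => h y) z x - h x) φ ∧
    -((((2 * Real.pi) ^ (-(d : ℝ) / 2) : ℝ) : ℂ) *
        ∫ ξ, Complex.exp (Complex.I * (⟪ξ, x⟫ : ℂ)) * SofPsi ψ b φ ξ *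
          fourierT (fun y => h y) ξ) =
      (∑ j, (b j : ℂ) * Gj ψ (fun y => h y) j x) +
        ∫ z, (Tz ψ (fun y => h y) z x - h x) ∂φ := by
  have h2π : (0 : ℝ) < 2 * Real.pi := by positivity
  set c : ℝ := ((2 * Real.pi) ^ (-(d : ℝ) / 2) : ℝ) with hc
  set H := fourierT (fun y => (h y : ℂ)) with hHdef
  set e : EuclideanSpace ℝ (Fin d) → ℂ :=
    fun ξ => Complex.exp (Complex.I * (⟪ξ, x⟫ : ℂ)) with he
  -- basic facts about H and e
  have hHcont : Continuous H := fourierT_continuous h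
  have hHint : Integrable H := fourierT_integrable h
  have hW : Integrable (fun ξ => (1 + ‖ξ‖ ^ 2) * ‖H ξ‖) := fourierT_weighted_integrable h
  have hecont : Continuous e := by
    apply Complex.continuous_exp.comp
    exact continuous_const.mul
      (Complex.continuous_ofReal.comp (continuous_id.inner continuous_const))
  have henorm : ∀ ξ, ‖e ξ‖ = 1 := fun ξ => by
    simp [he, Complex.norm_exp]
  -- the min function v
  set v : (Fin N → ℝ) → ℝ := fun z => min (Real.sqrt (∑ j, z j ^ 2)) 1 with hv
  have hvint : Integrable v φ := vmin_integrable φ hφint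
  set M : ℝ := ∫ z, v z ∂φ with hM
  have hMnonneg : 0 ≤ M := integral_nonneg fun z => vmin_nonneg z
  set K : EuclideanSpace ℝ (Fin d) → ℝ :=
    fun ξ => 2 + 2 * Real.sqrt N * C * (1 + ‖ξ‖ ^ 2) with hK
  have hKnonneg : ∀ ξ, 0 ≤ K ξ := fun ξ => by
    rw [hK]; positivity
  -- part A : claim 1
  have partA : ∀ ξ, Integrable
      (fun z : Fin N → ℝ => 1 - Complex.exp (∑ j, (z j : ℂ) * ψ j ξ)) φ := by
    intro ξ
    refine Integrable.mono' (hvint.const_mul (K ξ)) ?_ ?_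
    · apply Continuous.aestronglyMeasurable
      exact continuous_const.sub (Complex.continuous_exp.comp
        (continuous_finset_sum _ fun j _ =>
          (Complex.continuous_ofReal.comp (continuous_apply j)).mul continuous_const))
    · filter_upwards [hφsupp] with z hz
      exact bound_one_sub_exp ψ hre C hC hbound ξ z hz
  refine ⟨partA, ?_⟩
  -- Sint
  set Sint : EuclideanSpace ℝ (Fin d) → ℂ :=
    fun ξ => ∫ z, (1 - Complex.exp (∑ j, (z j : ℂ) * ψ j ξ)) ∂φ with hSintdef
  have hSofPsi : ∀ ξ, SofPsi ψ b φ ξ = (-∑ j, (b j : ℂ) * ψ j ξ) + Sint ξ := fun ξ => rfl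
  -- restriction
  set s0 : Set (Fin N → ℝ) := {(0 : Fin N → ℝ)}ᶜ with hs0
  haveI hSF : SigmaFinite (φ.restrict s0) := sigmaFinite_restrict φ hφint
  have hzero : ∀ ξ, (1 - Complex.exp (∑ j, (((0 : Fin N → ℝ)) j : ℂ) * ψ j ξ)) = (0 : ℂ) := by
    intro ξ; simp
  have hSint_restrict : ∀ ξ, Sint ξ =
      ∫ z, (1 - Complex.exp (∑ j, (z j : ℂ) * ψ j ξ)) ∂(φ.restrict s0) :=
    fun ξ => (restrict_trick φ _ (hzero ξ)).2
  have hsupp' : ∀ᵐ z ∂(φ.restrict s0), ∀ j, 0 ≤ z j := ae_restrict_of_ae hφsupp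
  -- measurability of Sint
  have hSintmeas : AEStronglyMeasurable Sint volume := by
    have heq : Sint = fun ξ => ∫ z,
        (fun p : EuclideanSpace ℝ (Fin d) × (Fin N → ℝ) =>
          1 - Complex.exp (∑ j, (p.2 j : ℂ) * ψ j p.1)) (ξ, z) ∂(φ.restrict s0) :=
      funext fun ξ => hSint_restrict ξ
    have hSM : StronglyMeasurable (fun p : EuclideanSpace ℝ (Fin d) × (Fin N → ℝ) =>
        1 - Complex.exp (∑ j, (p.2 j : ℂ) * ψ j p.1)) := by
      apply Measurable.stronglyMeasurable
      apply Measurable.sub measurable_const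
      apply Complex.measurable_exp.comp
      apply Finset.measurable_sum
      intro j _
      exact (Complex.measurable_ofReal.comp ((measurable_pi_apply j).comp measurable_snd)).mul
        ((hψmeas j).comp measurable_fst)
    rw [heq]
    exact (MeasureTheory.StronglyMeasurable.integral_prod_right'
      (ν := φ.restrict s0) hSM).aestronglyMeasurable
  -- norm bound for Sint
  have hSintbound : ∀ ξ, ‖Sint ξ‖ ≤ K ξ * M := by
    intro ξ
    calc ‖Sint ξ‖ ≤ ∫ z, ‖1 - Complex.exp (∑ j, (z j : ℂ) * ψ j ξ)‖ ∂φ :=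
          norm_integral_le_integral_norm _
    _ ≤ ∫ z, K ξ * v z ∂φ := by
        refine integral_mono_ae (partA ξ).norm (hvint.const_mul (K ξ)) ?_
        filter_upwards [hφsupp] with z hz
        exact bound_one_sub_exp ψ hre C hC hbound ξ z hz
    _ = K ξ * M := integral_const_mul _ _
  -- integrability in ξ of the pieces
  have hψjint : ∀ j, Integrable (fun ξ => e ξ * ψ j ξ * H ξ) := by
    intro j
    refine Integrable.mono' (hW.const_mul C) ?_ (Filter.Eventually.of_forall fun ξ => ?_)
    · exact ((hecont.measurable.mul (hψmeas j)).mul hHcont.measurable).aestronglyMeasurable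
    · rw [norm_mul, norm_mul, henorm, one_mul]
      have h1 : ‖ψ j ξ‖ ≤ C * (1 + ‖ξ‖ ^ 2) := hbound j ξ
      nlinarith [norm_nonneg (H ξ), norm_nonneg (ψ j ξ)]
  have hsum_int : Integrable (fun ξ => e ξ * (∑ j, (b j : ℂ) * ψ j ξ) * H ξ) := by
    have heq : (fun ξ => e ξ * (∑ j, (b j : ℂ) * ψ j ξ) * H ξ)
        = fun ξ => ∑ j, (b j : ℂ) * (e ξ * ψ j ξ * H ξ) := by
      funext ξ
      rw [Finset.mul_sum, Finset.sum_mul]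
      exact Finset.sum_congr rfl fun j _ => by ring
    rw [heq]
    exact integrable_finset_sum _ fun j _ => (hψjint j).const_mul _
  have hSH_int : Integrable (fun ξ => e ξ * Sint ξ * H ξ) := by
    refine Integrable.mono' (hW.const_mul ((2 + 2 * Real.sqrt N * C) * M)) ?_
      (Filter.Eventually.of_forall fun ξ => ?_)
    · exact (hecont.aestronglyMeasurable.mul hSintmeas).mul hHcont.aestronglyMeasurable
    · rw [norm_mul, norm_mul, henorm, one_mul]
      have h1 : ‖Sint ξ‖ ≤ K ξ * M := hSintbound ξ
      have h2 : K ξ ≤ (2 + 2 * Real.sqrt N * C) * (1 + ‖ξ‖ ^ 2) := by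
        simp only [hK]
        nlinarith [mul_nonneg (mul_nonneg (Real.sqrt_nonneg (N : ℝ)) hC.le) (sq_nonneg ‖ξ‖),
          sq_nonneg ‖ξ‖, mul_nonneg (Real.sqrt_nonneg (N : ℝ)) hC.le]
      nlinarith [mul_le_mul_of_nonneg_right h1 (norm_nonneg (H ξ)),
        mul_le_mul_of_nonneg_right (mul_le_mul_of_nonneg_right h2 hMnonneg)
          (norm_nonneg (H ξ))]
  -- claim 2
  have part2 : Integrable (fun ξ => e ξ * SofPsi ψ b φ ξ * H ξ) := by
    have heq : (fun ξ => e ξ * SofPsi ψ b φ ξ * H ξ)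
        = fun ξ => (-(e ξ * (∑ j, (b j : ℂ) * ψ j ξ) * H ξ)) + e ξ * Sint ξ * H ξ := by
      funext ξ
      rw [hSofPsi ξ]
      ring
    rw [heq]
    exact hsum_int.neg.add hSH_int
  refine ⟨part2, ?_⟩
  -- Fubini setup
  set F : (Fin N → ℝ) → EuclideanSpace ℝ (Fin d) → ℂ :=
    fun z ξ => e ξ * (1 - Complex.exp (∑ j, (z j : ℂ) * ψ j ξ)) * H ξ with hF
  have hFmeas : AEStronglyMeasurable (Function.uncurry F) ((φ.restrict s0).prod volume) := by
    apply Measurable.aestronglyMeasurable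
    have h1 : Measurable (fun p : (Fin N → ℝ) × EuclideanSpace ℝ (Fin d) =>
        1 - Complex.exp (∑ j, (p.1 j : ℂ) * ψ j p.2)) := by
      apply Measurable.sub measurable_const
      apply Complex.measurable_exp.comp
      apply Finset.measurable_sum
      intro j _
      exact (Complex.measurable_ofReal.comp ((measurable_pi_apply j).comp measurable_fst)).mul
        ((hψmeas j).comp measurable_snd)
    exact ((hecont.measurable.comp measurable_snd).mul h1).mul
      (hHcont.measurable.comp measurable_snd)
  have hsupp'' : ∀ᵐ p ∂((φ.restrict s0).prod
      (volume : Measure (EuclideanSpace ℝ (Fin d)))), ∀ j, 0 ≤ p.1 j :=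
    Measure.quasiMeasurePreserving_fst.tendsto_ae.eventually hsupp'
  have hFint : Integrable (Function.uncurry F) ((φ.restrict s0).prod volume) := by
    refine Integrable.mono' (Integrable.mul_prod (hvint.restrict (s := s0))
      (hW.const_mul (2 + 2 * Real.sqrt N * C))) hFmeas ?_
    filter_upwards [hsupp''] with p hp
    have hb1 := bound_one_sub_exp ψ hre C hC hbound p.2 p.1 hp
    have h2 : K p.2 ≤ (2 + 2 * Real.sqrt N * C) * (1 + ‖p.2‖ ^ 2) := by
      simp only [hK]
      nlinarith [mul_nonneg (mul_nonneg (Real.sqrt_nonneg (N : ℝ)) hC.le) (sq_nonneg ‖p.2‖),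
        sq_nonneg ‖p.2‖, mul_nonneg (Real.sqrt_nonneg (N : ℝ)) hC.le]
    have hnorm : ‖Function.uncurry F p‖
        = ‖1 - Complex.exp (∑ j, (p.1 j : ℂ) * ψ j p.2)‖ * ‖H p.2‖ := by
      rw [Function.uncurry, hF]
      rw [norm_mul, norm_mul, henorm, one_mul]
    rw [hnorm]
    have hvnn : 0 ≤ v p.1 := vmin_nonneg p.1
    have hKnn := hKnonneg p.2
    have hb1' : ‖1 - Complex.exp (∑ j, (p.1 j : ℂ) * ψ j p.2)‖ ≤ K p.2 * v p.1 := hb1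
    calc ‖1 - Complex.exp (∑ j, (p.1 j : ℂ) * ψ j p.2)‖ * ‖H p.2‖
        ≤ (K p.2 * v p.1) * ‖H p.2‖ := mul_le_mul_of_nonneg_right hb1' (norm_nonneg _)
      _ ≤ ((2 + 2 * Real.sqrt N * C) * (1 + ‖p.2‖ ^ 2) * v p.1) * ‖H p.2‖ := by
          refine mul_le_mul_of_nonneg_right (mul_le_mul_of_nonneg_right h2 hvnn) (norm_nonneg _)
      _ = v p.1 * ((2 + 2 * Real.sqrt N * C) * ((1 + ‖p.2‖ ^ 2) * ‖H p.2‖)) := by ring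
  have hswap := MeasureTheory.integral_integral_swap (μ := φ.restrict s0) (ν := volume)
    (f := F) hFint
  -- pointwise identity for the semigroup minus identity
  have hTzkey : ∀ z : Fin N → ℝ, (∀ j, 0 ≤ z j) →
      Tz ψ (fun y => h y) z x - h x = (-(c : ℂ)) * ∫ ξ, F z ξ := by
    intro z hz
    have hexp_le : ∀ ξ, ‖Complex.exp (∑ j, (z j : ℂ) * ψ j ξ)‖ ≤ 1 := fun ξ => by
      rw [Complex.norm_exp]
      exact Real.exp_le_one_iff.2 (re_sum_nonpos ψ hre ξ z hz)
    have hmeas_exp : Measurable fun ξ => Complex.exp (∑ j, (z j : ℂ) * ψ j ξ) := by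
      apply Complex.measurable_exp.comp
      exact Finset.measurable_sum _ fun j _ => measurable_const.mul (hψmeas j)
    have hint1 : Integrable (fun ξ => e ξ * Complex.exp (∑ j, (z j : ℂ) * ψ j ξ) * H ξ) := by
      refine hHint.norm.mono'
        (((hecont.measurable.mul hmeas_exp).mul hHcont.measurable).aestronglyMeasurable)
        (Filter.Eventually.of_forall fun ξ => ?_)
      rw [norm_mul, norm_mul, henorm, one_mul]
      calc ‖Complex.exp (∑ j, (z j : ℂ) * ψ j ξ)‖ * ‖H ξ‖ ≤ 1 * ‖H ξ‖ :=
            mul_le_mul_of_nonneg_right (hexp_le ξ) (norm_nonneg _)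
        _ = ‖H ξ‖ := one_mul _
    have hint2 : Integrable (fun ξ => e ξ * H ξ) := by
      refine hHint.norm.mono'
        ((hecont.measurable.mul hHcont.measurable).aestronglyMeasurable)
        (Filter.Eventually.of_forall fun ξ => ?_)
      rw [norm_mul, henorm, one_mul]
    have hinv : (c : ℂ) * ∫ ξ, e ξ * H ξ = h x := fourierT_inversion h x
    have hTzdef : Tz ψ (fun y => h y) z x
        = (c : ℂ) * ∫ ξ, e ξ * Complex.exp (∑ j, (z j : ℂ) * ψ j ξ) * H ξ := rfl
    rw [hTzdef, ← hinv, ← mul_sub, ← integral_sub hint1 hint2]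
    have heq2 : (fun ξ => e ξ * Complex.exp (∑ j, (z j : ℂ) * ψ j ξ) * H ξ - e ξ * H ξ)
        = fun ξ => -(F z ξ) := by
      funext ξ
      rw [hF]
      ring
    rw [heq2, integral_neg]
    ring
  have hTz0 : Tz ψ (fun y => h y) (0 : Fin N → ℝ) x - h x = 0 := by
    rw [hTzkey 0 (fun j => le_rfl)]
    have heq3 : (fun ξ => F (0 : Fin N → ℝ) ξ) = fun _ => (0 : ℂ) := by
      funext ξ
      rw [hF]
      simp
    rw [heq3, integral_zero, mul_zero]
  -- claim 3
  have hint_inner : Integrable (fun z => ∫ ξ, F z ξ) (φ.restrict s0) := by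
    have := hFint.integral_prod_left
    exact this
  have part3 : Integrable (fun z => Tz ψ (fun y => h y) z x - h x) φ := by
    rw [(restrict_trick φ _ hTz0).1]
    refine (hint_inner.const_mul (-(c : ℂ))).congr ?_
    filter_upwards [hsupp'] with z hz
    exact (hTzkey z hz).symm
  refine ⟨part3, ?_⟩
  -- final identity
  have hsplit : ∫ ξ, e ξ * SofPsi ψ b φ ξ * H ξ
      = (∫ ξ, e ξ * Sint ξ * H ξ) - ∫ ξ, e ξ * (∑ j, (b j : ℂ) * ψ j ξ) * H ξ := by
    rw [← integral_sub hSH_int hsum_int]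
    refine integral_congr_ae (Filter.Eventually.of_forall fun ξ => ?_)
    dsimp only
    rw [hSofPsi ξ]
    ring
  have hstep2 : (c : ℂ) * ∫ ξ, e ξ * (∑ j, (b j : ℂ) * ψ j ξ) * H ξ
      = ∑ j, (b j : ℂ) * Gj ψ (fun y => h y) j x := by
    have hpt : (fun ξ => e ξ * (∑ j, (b j : ℂ) * ψ j ξ) * H ξ)
        = fun ξ => ∑ j, (b j : ℂ) * (e ξ * ψ j ξ * H ξ) := by
      funext ξ
      rw [Finset.mul_sum, Finset.sum_mul]
      exact Finset.sum_congr rfl fun j _ => by ring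
    rw [hpt, integral_finset_sum _ (fun j _ => (hψjint j).const_mul _), Finset.mul_sum]
    refine Finset.sum_congr rfl fun j _ => ?_
    rw [integral_const_mul]
    have hGj : Gj ψ (fun y => h y) j x = (c : ℂ) * ∫ ξ, e ξ * ψ j ξ * H ξ := rfl
    rw [hGj]
    ring
  have hstep3 : ∫ ξ, e ξ * Sint ξ * H ξ = ∫ z, (∫ ξ, F z ξ) ∂(φ.restrict s0) := by
    rw [hswap]
    refine integral_congr_ae (Filter.Eventually.of_forall fun ξ => ?_)
    dsimp only
    rw [hSint_restrict ξ, ← integral_const_mul, ← integral_mul_const]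
  have hstep4 : ∫ z, (Tz ψ (fun y => h y) z x - h x) ∂φ
      = ∫ z, (Tz ψ (fun y => h y) z x - h x) ∂(φ.restrict s0) :=
    (restrict_trick φ _ hTz0).2
  have hstep5 : ∫ z, (Tz ψ (fun y => h y) z x - h x) ∂(φ.restrict s0)
      = ∫ z, (-(c : ℂ)) * (∫ ξ, F z ξ) ∂(φ.restrict s0) := by
    refine integral_congr_ae ?_
    filter_upwards [hsupp'] with z hz
    exact hTzkey z hz
  have hgoal : -((c : ℂ) * ∫ ξ, e ξ * SofPsi ψ b φ ξ * H ξ)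
      = (∑ j, (b j : ℂ) * Gj ψ (fun y => h y) j x)
        + ∫ z, (Tz ψ (fun y => h y) z x - h x) ∂φ := by
    rw [hsplit, hstep3, hstep4, hstep5, integral_const_mul, ← hstep2]
    ring
  exact hgoal
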